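/- Let S be a Cu-semigroup and let x, y be full elements of S with ρ(x, y) = 0. Then ρ(y, x) = 0 if F_x(S) = ∅, and ρ(y, x) = ∞ if F_x(S) ≠ ∅. -/

import Mathlib

open scoped ENNReal

/-- `x' ≪ x`: for every increasing sequence whose supremum is `≥ x`,
some term of the sequence dominates `x'`. -/
def CuWayBelow {S : Type*} [Preorder S] (x' x : S) : Prop :=
  ∀ f : ℕ → S, Monotone f → ∀ s : S, IsLUB (Set.range f) s → x ≤ s → ∃ n, x' ≤ f n

/-- A `Cu`-semigroup: a partially ordered abelian monoid whose least element is `0`,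
satisfying the axioms (O1)–(O4). -/
class CuSemigroup (S : Type*) extends AddCommMonoid S, PartialOrder S, IsOrderedAddMonoid S where
  zero_le : ∀ x : S, 0 ≤ x
  O1 : ∀ f : ℕ → S, Monotone f → ∃ s : S, IsLUB (Set.range f) s
  O2 : ∀ x : S, ∃ f : ℕ → S, (∀ n, CuWayBelow (f n) (f (n + 1))) ∧ IsLUB (Set.range f) x
  O3 : ∀ {x' x y' y : S}, CuWayBelow x' x → CuWayBelow y' y → CuWayBelow (x' + y') (x + y)
  O4 : ∀ f g : ℕ → S, Monotone f → Monotone g → ∀ a b : S,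
      IsLUB (Set.range f) a → IsLUB (Set.range g) b →
      IsLUB (Set.range fun n => f n + g n) (a + b)

/-- A functional on a `Cu`-semigroup: a map `S → [0,∞]` which is additive, order
preserving, sends `0` to `0`, and preserves suprema of increasing sequences. -/
structure IsCuFunctional {S : Type*} [CuSemigroup S] (Λ : S → ℝ≥0∞) : Prop where
  map_zero : Λ 0 = 0
  map_add : ∀ x y : S, Λ (x + y) = Λ x + Λ y
  mono : Monotone Λ
  map_sup : ∀ f : ℕ → S, Monotone f → ∀ s : S, IsLUB (Set.range f) s → Λ s = ⨆ n, Λ (f n)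

/-- `x` is full if `∞ · x = sup_n (n • x)` is the largest element of `S`. -/
def IsFull {S : Type*} [CuSemigroup S] (x : S) : Prop :=
  ∀ s : S, IsLUB (Set.range fun n : ℕ => n • x) s → ∀ y : S, y ≤ s

/-- `F_w(S) ≠ ∅`: there exists a functional normalized at `w`. -/
def FNormNonempty {S : Type*} [CuSemigroup S] (w : S) : Prop :=
  ∃ Λ : S → ℝ≥0∞, IsCuFunctional Λ ∧ Λ w = 1

/-- The rank ratio `ρ(x, y)`: the infimum of all `r ∈ (0,∞)` with
`λ(x) ≤ r·λ(y)` for every functional `λ`; `∞` if there is no such `r`. -/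
noncomputable def rankRatio {S : Type*} [CuSemigroup S] (x y : S) : ℝ≥0∞ :=
  sInf {r : ℝ≥0∞ | 0 < r ∧ r ≠ ⊤ ∧ ∀ Λ : S → ℝ≥0∞, IsCuFunctional Λ → Λ x ≤ r * Λ y}

/-- `S` has `r`-comparison relative to `w`. -/
def HasRComparison {S : Type*} [CuSemigroup S] (r : ℝ≥0∞) (w : S) : Prop :=
  ∀ x y : S, (∀ Λ : S → ℝ≥0∞, IsCuFunctional Λ → Λ x + r * Λ w ≤ Λ y) → x ≤ y

/-- The radius of comparison of `S` relative to `w`: the infimum of all `r ∈ (0,∞)`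
for which `S` has `r`-comparison relative to `w`; `∞` if there is no such `r`. -/
noncomputable def rc {S : Type*} [CuSemigroup S] (w : S) : ℝ≥0∞ :=
  sInf {r : ℝ≥0∞ | 0 < r ∧ r ≠ ⊤ ∧ HasRComparison r w}

/-- Lemma (lemRhoInvese): for full elements `x, y` with `ρ(x, y) = 0`,
`ρ(y, x) = 0` if `F_x(S) = ∅` and `ρ(y, x) = ∞` if `F_x(S) ≠ ∅`. -/
lemma cu_nsmul_mono {S : Type*} [CuSemigroup S] (x : S) :
    Monotone (fun n : ℕ => n • x) := by
  intro n m hnm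
  obtain ⟨k, rfl⟩ := Nat.exists_eq_add_of_le hnm
  simp only [add_nsmul]
  exact le_add_of_nonneg_right (CuSemigroup.zero_le _)

lemma cu_func_nsmul {S : Type*} [CuSemigroup S] {Λ : S → ℝ≥0∞} (hΛ : IsCuFunctional Λ)
    (x : S) : ∀ n : ℕ, Λ (n • x) = n * Λ x := by
  intro n
  induction n with
  | zero => simpa using hΛ.map_zero
  | succ n ih =>
    rw [succ_nsmul, hΛ.map_add, ih]
    push_cast
    ring

lemma cu_func_zero_of_full {S : Type*} [CuSemigroup S] {Λ : S → ℝ≥0∞}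
    (hΛ : IsCuFunctional Λ) {x : S} (hx : IsFull x) (h0 : Λ x = 0) (y : S) : Λ y = 0 := by
  obtain ⟨s, hs⟩ := CuSemigroup.O1 (fun n : ℕ => n • x) (cu_nsmul_mono x)
  have hys := hx s hs y
  have hs0 : Λ s = 0 := by
    rw [hΛ.map_sup _ (cu_nsmul_mono x) s hs]
    simp [cu_func_nsmul hΛ, h0]
  exact le_antisymm (hs0 ▸ hΛ.mono hys) zero_le

lemma cu_scale_functional {S : Type*} [CuSemigroup S] {Λ : S → ℝ≥0∞}
    (hΛ : IsCuFunctional Λ) (c : ℝ≥0∞) : IsCuFunctional (fun z => c * Λ z) where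
  map_zero := by simp [hΛ.map_zero]
  map_add := fun a b => by simp only [hΛ.map_add]; ring
  mono := fun a b hab => mul_le_mul_right (hΛ.mono hab) c
  map_sup := fun f hf s hs => by
    simp only [hΛ.map_sup f hf s hs, ENNReal.mul_iSup]

theorem stmt7 {S : Type*} [CuSemigroup S] (x y : S)
    (hx : IsFull x) (hy : IsFull y) (h : rankRatio x y = 0) :
    (¬ FNormNonempty x → rankRatio y x = 0) ∧
      (FNormNonempty x → rankRatio y x = ⊤) := by
  constructor
  · -- F_x(S) = ∅ case
    intro hne
    -- every functional has Λ x = 0 or Λ x = ⊤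
    have key : ∀ Λ : S → ℝ≥0∞, IsCuFunctional Λ → Λ x = 0 ∨ Λ x = ⊤ := by
      intro Λ hΛ
      by_contra hc
      push_neg at hc
      exact hne ⟨fun z => (Λ x)⁻¹ * Λ z, cu_scale_functional hΛ _,
        ENNReal.inv_mul_cancel hc.1 hc.2⟩
    -- hence every r ∈ (0,∞) is in the defining set of ρ(y,x)
    have hmem : ∀ r : ℝ≥0∞, 0 < r → r ≠ ⊤ →
        r ∈ {r : ℝ≥0∞ | 0 < r ∧ r ≠ ⊤ ∧
          ∀ Λ : S → ℝ≥0∞, IsCuFunctional Λ → Λ y ≤ r * Λ x} := by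
      intro r hr hrt
      refine ⟨hr, hrt, fun Λ hΛ => ?_⟩
      rcases key Λ hΛ with h0 | htop
      · rw [cu_func_zero_of_full hΛ hx h0 y]
        exact zero_le
      · rw [htop, ENNReal.mul_top hr.ne']
        exact le_top
    have hle : rankRatio y x ≤ 0 := by
      refine ENNReal.le_of_forall_pos_le_add fun ε hε _ => ?_
      rw [zero_add]
      exact sInf_le (hmem ε (by exact_mod_cast hε) ENNReal.coe_ne_top)
    exact le_antisymm hle zero_le
  · -- F_x(S) ≠ ∅ case
    intro ⟨Λ, hΛ, hΛx⟩
    -- first: Λ y = ⊤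
    have hAne : {r : ℝ≥0∞ | 0 < r ∧ r ≠ ⊤ ∧
        ∀ Λ : S → ℝ≥0∞, IsCuFunctional Λ → Λ x ≤ r * Λ y}.Nonempty := by
      by_contra hemp
      rw [Set.not_nonempty_iff_eq_empty] at hemp
      rw [rankRatio, hemp, sInf_empty] at h
      exact ENNReal.top_ne_zero h
    have hΛy : Λ y = ⊤ := by
      by_contra hyt
      rcases eq_or_ne (Λ y) 0 with hy0 | hy0
      · obtain ⟨r, hr⟩ := hAne
        have := hr.2.2 Λ hΛ
        rw [hΛx, hy0, mul_zero] at this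
        exact one_ne_zero (le_antisymm this zero_le)
      · have hinv : (0 : ℝ≥0∞) < (Λ y)⁻¹ := ENNReal.inv_pos.mpr hyt
        have hlt : rankRatio x y < (Λ y)⁻¹ := by rw [h]; exact hinv
        obtain ⟨r, hr, hrlt⟩ := sInf_lt_iff.mp hlt
        have h1 : (1 : ℝ≥0∞) ≤ r * Λ y := by rw [← hΛx]; exact hr.2.2 Λ hΛ
        have h2 : r * Λ y < (Λ y)⁻¹ * Λ y :=
          (ENNReal.mul_lt_mul_iff_left hy0 hyt).mpr hrlt
        rw [ENNReal.inv_mul_cancel hy0 hyt] at h2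
        exact absurd (h1.trans_lt h2) (lt_irrefl 1)
    -- now the set for ρ(y,x) is empty
    rw [rankRatio]
    rw [show {r : ℝ≥0∞ | 0 < r ∧ r ≠ ⊤ ∧
        ∀ Λ : S → ℝ≥0∞, IsCuFunctional Λ → Λ y ≤ r * Λ x} = ∅ from ?_, sInf_empty]
    rw [Set.eq_empty_iff_forall_notMem]
    rintro r ⟨hr, hrt, hall⟩
    have := hall Λ hΛ
    rw [hΛy, hΛx, mul_one, top_le_iff] at this
    exact hrt this
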